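/- For γ > 0, ν > 1, and any nonnegative integer k < ν, if Y follows the two-piece Student t distribution with density p(y|γ,ν) = (2/(γ + 1/γ))[f_ν(y/γ)·1_{[0,∞)}(y) + f_ν(γy)·1_{(−∞,0)}(y)], then E[Y^k] = (2/(γ + 1/γ))·[γ^{k+1} + (−1)^k γ^{−k−1}]·(ν^{k/2}/(2√π))·(Γ((k+1)/2)Γ((ν−k)/2)/Γ(ν/2)). -/

import Mathlib

open Real MeasureTheory Filter Topology

/-- Student t density with ν degrees of freedom. -/
noncomputable def tDens (ν x : ℝ) : ℝ :=
  Real.Gamma ((ν + 1) / 2) / (Real.sqrt (Real.pi * ν) * Real.Gamma (ν / 2)) *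
    (1 + x ^ 2 / ν) ^ (-((ν + 1) / 2))

/-- Two-piece Student t density with skewness γ and degrees of freedom ν. -/
noncomputable def tpDens (γ ν ε : ℝ) : ℝ :=
  2 / (γ + 1 / γ) * (if 0 ≤ ε then tDens ν (ε / γ) else tDens ν (γ * ε))

/-- Mean of the two-piece Student t distribution. -/
noncomputable def mMean (γ ν : ℝ) : ℝ :=
  2 * ν * Real.Gamma ((ν + 1) / 2) /
    (Real.sqrt (Real.pi * ν) * (ν - 1) * Real.Gamma (ν / 2)) * (γ - 1 / γ)

/-- Centred two-piece Student t density (CTPT). -/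
noncomputable def ctptDens (γ ν ε : ℝ) : ℝ :=
  2 / (γ + 1 / γ) *
    (if -(mMean γ ν) ≤ ε then tDens ν ((ε + mMean γ ν) / γ)
     else tDens ν (γ * (ε + mMean γ ν)))

open Set

lemma realBeta {a b : ℝ} (ha : 0 < a) (hb : 0 < b) :
    ∫ x in (0:ℝ)..1, x ^ (a - 1) * (1 - x) ^ (b - 1) =
      Real.Gamma a * Real.Gamma b / Real.Gamma (a + b) := by
  have key := Complex.Gamma_mul_Gamma_eq_betaIntegral (s := (a : ℂ)) (t := (b : ℂ))
    (by simpa using ha) (by simpa using hb)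
  have hβ : Complex.betaIntegral (a : ℂ) (b : ℂ) =
      ((∫ x in (0:ℝ)..1, x ^ (a - 1) * (1 - x) ^ (b - 1) : ℝ) : ℂ) := by
    rw [Complex.betaIntegral, ← intervalIntegral.integral_ofReal]
    apply intervalIntegral.integral_congr
    intro x hx
    rw [Set.uIcc_of_le zero_le_one] at hx
    obtain ⟨hx0, hx1⟩ := hx
    simp only []
    rw [Complex.ofReal_mul, Complex.ofReal_cpow hx0, Complex.ofReal_cpow (by linarith)]
    push_cast
    ring
  rw [hβ, ← Complex.ofReal_add, Complex.Gamma_ofReal, Complex.Gamma_ofReal,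
    Complex.Gamma_ofReal, ← Complex.ofReal_mul, ← Complex.ofReal_mul] at key
  have := Complex.ofReal_inj.mp key
  have hG : Real.Gamma (a + b) ≠ 0 := (Real.Gamma_pos_of_pos (by linarith)).ne'
  field_simp
  linarith [this]

lemma betaIoi {a b : ℝ} (ha : 0 < a) (hb : 0 < b) :
    ∫ x in Ioi (0:ℝ), x ^ (a - 1) * (1 + x) ^ (-(a + b)) =
      Real.Gamma a * Real.Gamma b / Real.Gamma (a + b) := by
  have himg : (fun u : ℝ => u / (1 - u)) '' Ioo 0 1 = Ioi 0 := by
    ext y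
    constructor
    · rintro ⟨u, ⟨hu0, hu1⟩, rfl⟩
      exact div_pos hu0 (by linarith)
    · intro (hy : 0 < y)
      refine ⟨y / (1 + y), ⟨div_pos hy (by linarith), ?_⟩, ?_⟩
      · rw [div_lt_one (by linarith)]; linarith
      · field_simp; ring
  have hderiv : ∀ u ∈ Ioo (0:ℝ) 1, HasDerivWithinAt (fun u : ℝ => u / (1 - u))
      (((1 - u) ^ 2)⁻¹) (Ioo 0 1) u := by
    intro u hu
    have h1 : (1 : ℝ) - u ≠ 0 := ne_of_gt (by linarith [hu.2] : (0:ℝ) < 1 - u)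
    have hd := (hasDerivAt_id u).div ((hasDerivAt_id u).const_sub 1) h1
    have e : ((1 - u) ^ 2)⁻¹ = (1 * (1 - id u) - id u * -1) / (1 - id u) ^ 2 := by
      simp only [id_eq]; ring
    rw [e]; exact hd.hasDerivWithinAt
  have hinj : Set.InjOn (fun u : ℝ => u / (1 - u)) (Ioo 0 1) := by
    rintro u ⟨hu0, hu1⟩ v ⟨hv0, hv1⟩ h
    have h1 : (1:ℝ) - u ≠ 0 := by intro h; linarith [h]
    have h2 : (1:ℝ) - v ≠ 0 := by intro h; linarith [h]
    field_simp at h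
    nlinarith [h]
  have key := integral_image_eq_integral_abs_deriv_smul measurableSet_Ioo hderiv hinj
    (fun x : ℝ => x ^ (a - 1) * (1 + x) ^ (-(a + b)))
  rw [himg] at key
  rw [key]
  have hcong : ∀ u ∈ Ioo (0:ℝ) 1,
      |((1 - u) ^ 2)⁻¹| • ((u / (1 - u)) ^ (a - 1) * (1 + u / (1 - u)) ^ (-(a + b)))
        = u ^ (a - 1) * (1 - u) ^ (b - 1) := by
    intro u ⟨hu0, hu1⟩
    have ht : (0:ℝ) < 1 - u := by linarith
    have h1 : 1 + u / (1 - u) = (1 - u)⁻¹ := by field_simp; ring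
    have h2 : ((1 - u) ^ 2)⁻¹ = (1 - u) ^ (-2 : ℝ) := by
      rw [← Real.rpow_natCast (1-u) 2, ← Real.rpow_neg ht.le]; norm_num
    have comb : ∀ s t : ℝ, (1-u) ^ s * (1-u) ^ t = (1-u) ^ (s+t) :=
      fun s t => (Real.rpow_add ht s t).symm
    rw [smul_eq_mul, h1, abs_of_pos (by positivity), h2,
      Real.div_rpow hu0.le ht.le, Real.inv_rpow ht.le, ← Real.rpow_neg ht.le, neg_neg,
      div_eq_mul_inv, ← Real.rpow_neg ht.le]
    have h3 : (1-u) ^ (-2:ℝ) * ((1-u) ^ (-(a-1)) * (1-u) ^ (a+b)) = (1-u) ^ (b-1) := by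
      rw [comb, comb]; congr 1; ring
    rw [← h3]; ring
  rw [setIntegral_congr_fun measurableSet_Ioo hcong, ← integral_Ioc_eq_integral_Ioo,
    ← intervalIntegral.integral_of_le zero_le_one, realBeta ha hb]

lemma integrableOn_aux {c p : ℝ} (hc : 0 < c) (k : ℕ) (hp : (k : ℝ) + 1 < 2 * p) :
    IntegrableOn (fun x : ℝ => x ^ k * (1 + x ^ 2 / c) ^ (-p)) (Ioi 0) := by
  have hcont : Continuous (fun x : ℝ => x ^ k * (1 + x ^ 2 / c) ^ (-p)) := by
    apply Continuous.mul (continuous_pow k)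
    apply Continuous.rpow_const (by continuity)
    intro x
    left
    positivity
  have h1 : IntegrableOn (fun x : ℝ => x ^ k * (1 + x ^ 2 / c) ^ (-p)) (Ioc 0 1) :=
    hcont.integrableOn_Ioc
  have h2 : IntegrableOn (fun x : ℝ => x ^ k * (1 + x ^ 2 / c) ^ (-p)) (Ioi 1) := by
    have hbase : IntegrableOn (fun x : ℝ => c ^ p * x ^ ((k : ℝ) - 2 * p)) (Ioi 1) :=
      (integrableOn_Ioi_rpow_of_lt (by linarith) one_pos).const_mul _
    apply hbase.mono' (hcont.aestronglyMeasurable.restrict)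
    filter_upwards [ae_restrict_mem measurableSet_Ioi] with x (hx : 1 < x)
    have hx0 : (0:ℝ) < x := by linarith
    have hb : (0:ℝ) < x ^ 2 / c := by positivity
    rw [Real.norm_eq_abs, abs_of_nonneg (by positivity)]
    have step1 : (1 + x ^ 2 / c) ^ (-p) ≤ (x ^ 2 / c) ^ (-p) := by
      apply Real.rpow_le_rpow_of_nonpos hb (by linarith)
      nlinarith
    have step2 : (x ^ 2 / c) ^ (-p) = c ^ p * x ^ (-(2*p)) := by
      rw [Real.div_rpow (by positivity) hc.le, ← Real.rpow_natCast x 2,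
        ← Real.rpow_mul hx0.le, div_eq_mul_inv, ← Real.rpow_neg hc.le, neg_neg, mul_comm]
      norm_num
    calc x ^ k * (1 + x ^ 2 / c) ^ (-p) ≤ x ^ k * (x ^ 2 / c) ^ (-p) := by
          apply mul_le_mul_of_nonneg_left step1 (by positivity)
      _ = c ^ p * x ^ ((k:ℝ) - 2 * p) := by
          rw [step2, ← Real.rpow_natCast x k, ← mul_assoc, mul_comm (x ^ ((k:ℕ):ℝ)) (c^p),
            mul_assoc, ← Real.rpow_add hx0, ← sub_eq_add_neg]
  have := h1.union h2
  rwa [Ioc_union_Ioi_eq_Ioi zero_le_one] at this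

lemma intOn_neg {h : ℝ → ℝ} (hh : IntegrableOn h (Ioi (0:ℝ))) :
    IntegrableOn (fun x => h (-x)) (Iio (0:ℝ)) := by
  have A : MeasurableEmbedding (fun x : ℝ => -x) :=
    (Homeomorph.neg ℝ).isClosedEmbedding.measurableEmbedding
  have h1 : (volume : Measure ℝ).restrict (Iio 0) =
      ((volume : Measure ℝ).restrict (Ioi 0)).map (fun x : ℝ => -x) := by
    rw [show ((volume : Measure ℝ).restrict (Ioi (0:ℝ))).map (fun x : ℝ => -x)
        = (((volume : Measure ℝ).map (fun x : ℝ => -x)).restrict (Iio 0)) from ?_]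
    · rw [Measure.map_neg_eq_self]
    · rw [Measure.restrict_map A.measurable measurableSet_Iio]
      congr 1
      ext x
      simp
  rw [IntegrableOn, h1, A.integrable_map_iff]
  exact hh.congr_fun (fun x _ => by simp) measurableSet_Ioi |>.mono_set (by simp) |>.congr
    (Filter.EventuallyEq.rfl)

lemma J_val {ν : ℝ} (hν : 1 < ν) {k : ℕ} (hk : (k : ℝ) < ν) :
    ∫ x in Ioi (0:ℝ), x ^ k * (1 + x ^ 2) ^ (-((ν + 1) / 2)) =
      (1 / 2) * (Real.Gamma (((k:ℝ) + 1) / 2) * Real.Gamma ((ν - k) / 2) /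
        Real.Gamma ((ν + 1) / 2)) := by
  set a : ℝ := ((k:ℝ) + 1) / 2 with ha_def
  set b : ℝ := (ν - k) / 2 with hb_def
  have ha : 0 < a := by positivity
  have hb : 0 < b := by simp only [hb_def]; linarith
  have hab : a + b = (ν + 1) / 2 := by simp only [ha_def, hb_def]; ring
  have key := MeasureTheory.integral_comp_rpow_Ioi_of_pos
    (g := fun y : ℝ => (1/2 : ℝ) * (y ^ (a - 1) * (1 + y) ^ (-(a + b)))) (p := 2) two_pos
  have hlhs : ∀ x ∈ Ioi (0:ℝ),
      (2 * x ^ ((2:ℝ) - 1)) • ((1/2 : ℝ) * ((x ^ (2:ℝ)) ^ (a - 1) * (1 + x ^ (2:ℝ)) ^ (-(a + b))))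
        = x ^ k * (1 + x ^ 2) ^ (-((ν + 1) / 2)) := by
    intro x (hx : 0 < x)
    have h2 : x ^ (2:ℝ) = x ^ 2 := by
      rw [← Real.rpow_natCast x 2]; norm_num
    rw [smul_eq_mul, h2, ← h2, ← Real.rpow_mul hx.le, hab]
    have : (2:ℝ) * (a - 1) = (k:ℝ) - 1 := by simp only [ha_def]; ring
    rw [this, h2]
    have hxk : x * x ^ ((k:ℝ) - 1) = x ^ k := by
      rw [← Real.rpow_natCast x k,
        show x * x ^ ((k:ℝ) - 1) = x ^ (1:ℝ) * x ^ ((k:ℝ) - 1) from by rw [Real.rpow_one],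
        ← Real.rpow_add hx]
      norm_num
    rw [show ((2:ℝ) - 1) = (1:ℝ) from by norm_num, Real.rpow_one, ← hxk]
    ring
  rw [← setIntegral_congr_fun measurableSet_Ioi hlhs, key,
    MeasureTheory.integral_const_mul, betaIoi ha hb, hab]

lemma M_val {ν : ℝ} (hν : 1 < ν) {k : ℕ} (hk : (k : ℝ) < ν) :
    ∫ x in Ioi (0:ℝ), x ^ k * tDens ν x =
      ν ^ ((k:ℝ) / 2) / (2 * Real.sqrt Real.pi) *
        (Real.Gamma (((k:ℝ) + 1) / 2) * Real.Gamma ((ν - k) / 2) /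
          Real.Gamma (ν / 2)) := by
  have hν0 : (0:ℝ) < ν := by linarith
  have hs : (0:ℝ) < Real.sqrt ν := Real.sqrt_pos.mpr hν0
  set C : ℝ := Real.Gamma ((ν + 1) / 2) / (Real.sqrt (Real.pi * ν) * Real.Gamma (ν / 2)) with hC
  have step0 : ∫ x in Ioi (0:ℝ), x ^ k * tDens ν x =
      C * ∫ x in Ioi (0:ℝ), x ^ k * (1 + x ^ 2 / ν) ^ (-((ν + 1) / 2)) := by
    rw [← integral_const_mul]
    apply setIntegral_congr_fun measurableSet_Ioi
    intro x _
    simp only [tDens]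
    ring
  have key := MeasureTheory.integral_comp_mul_left_Ioi
    (g := fun x : ℝ => x ^ k * (1 + x ^ 2 / ν) ^ (-((ν + 1) / 2))) 0 hs
  rw [mul_zero] at key
  have hg : ∀ x ∈ Ioi (0:ℝ),
      (Real.sqrt ν * x) ^ k * (1 + (Real.sqrt ν * x) ^ 2 / ν) ^ (-((ν + 1) / 2))
        = Real.sqrt ν ^ k * (x ^ k * (1 + x ^ 2) ^ (-((ν + 1) / 2))) := by
    intro x _
    have : (Real.sqrt ν * x) ^ 2 / ν = x ^ 2 := by
      rw [mul_pow, Real.sq_sqrt hν0.le]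
      field_simp
    rw [this, mul_pow]
    ring
  rw [setIntegral_congr_fun measurableSet_Ioi hg, integral_const_mul, J_val hν hk,
    smul_eq_mul] at key
  -- key : √ν^k * ((1/2) * (...)) = (√ν)⁻¹ * ∫ g
  have hint : ∫ x in Ioi (0:ℝ), x ^ k * (1 + x ^ 2 / ν) ^ (-((ν + 1) / 2)) =
      Real.sqrt ν * (Real.sqrt ν ^ k * ((1 / 2) * (Real.Gamma (((k:ℝ) + 1) / 2) *
        Real.Gamma ((ν - k) / 2) / Real.Gamma ((ν + 1) / 2)))) := by
    rw [key, ← mul_assoc, mul_inv_cancel₀ hs.ne', one_mul]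
  rw [step0, hint, hC]
  have hsq : Real.sqrt (Real.pi * ν) = Real.sqrt Real.pi * Real.sqrt ν :=
    Real.sqrt_mul Real.pi_pos.le ν
  have hpow : Real.sqrt ν ^ k = ν ^ ((k:ℝ) / 2 : ℝ) := by
    rw [Real.sqrt_eq_rpow, ← Real.rpow_natCast (ν ^ ((1:ℝ)/2)) k, ← Real.rpow_mul hν0.le]
    congr 1
    push_cast
    ring
  have hGp : Real.Gamma ((ν + 1) / 2) ≠ 0 := (Real.Gamma_pos_of_pos (by linarith)).ne'
  have hGν : Real.Gamma (ν / 2) ≠ 0 := (Real.Gamma_pos_of_pos (by linarith)).ne'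
  have hπ : (0:ℝ) < Real.sqrt Real.pi := Real.sqrt_pos.mpr Real.pi_pos
  rw [hsq, hpow]
  field_simp


theorem stmt6 (γ ν : ℝ) (hγ : 0 < γ) (hν : 1 < ν) (k : ℕ) (hk : (k : ℝ) < ν) :
    ∫ y : ℝ, y ^ k * tpDens γ ν y =
      2 / (γ + 1 / γ) * (γ ^ (k + 1) + (-1 : ℝ) ^ k * γ ^ (-(k : ℤ) - 1)) *
        (ν ^ ((k : ℝ) / 2) / (2 * Real.sqrt Real.pi)) *
        (Real.Gamma (((k : ℝ) + 1) / 2) * Real.Gamma ((ν - k) / 2) /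
          Real.Gamma (ν / 2)) := by
  have hν0 : (0:ℝ) < ν := by linarith
  set c' : ℝ := 2 / (γ + 1 / γ) with hc'
  set C : ℝ := Real.Gamma ((ν + 1) / 2) / (Real.sqrt (Real.pi * ν) * Real.Gamma (ν / 2)) with hC
  set fpos : ℝ → ℝ := fun y => c' * (y ^ k * tDens ν (y / γ)) with hfpos
  set fneg : ℝ → ℝ := fun y => c' * (y ^ k * tDens ν (γ * y)) with hfneg
  -- explicit forms
  have hfpos_eq : fpos = fun y => (c' * C) * (y ^ k * (1 + y ^ 2 / (γ ^ 2 * ν)) ^ (-((ν+1)/2))) := by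
    funext y
    have : (y / γ) ^ 2 / ν = y ^ 2 / (γ ^ 2 * ν) := by
      field_simp
    simp only [hfpos, tDens, this, ← hC]
    ring
  have hfneg_eq : fneg = fun y => (c' * C) * (y ^ k * (1 + y ^ 2 / (ν / γ ^ 2)) ^ (-((ν+1)/2))) := by
    funext y
    have : (γ * y) ^ 2 / ν = y ^ 2 / (ν / γ ^ 2) := by
      field_simp
    simp only [hfneg, tDens, this, ← hC]
    ring
  -- integrability
  have hintpos : IntegrableOn fpos (Ici (0:ℝ)) := by
    rw [integrableOn_Ici_iff_integrableOn_Ioi, hfpos_eq]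
    exact (integrableOn_aux (by positivity) k (by linarith)).const_mul _
  have hintneg : IntegrableOn fneg (Iio (0:ℝ)) := by
    have h1 : IntegrableOn (fun x : ℝ => x ^ k * (1 + x ^ 2 / (ν / γ ^ 2)) ^ (-((ν+1)/2)))
        (Ioi 0) := integrableOn_aux (by positivity) k (by linarith)
    have h2 := (intOn_neg h1).const_mul ((-1 : ℝ) ^ k * (c' * C))
    apply IntegrableOn.congr_fun h2 _ measurableSet_Iio
    intro y _
    simp only [hfneg_eq]
    have hs1 : ((-1:ℝ)) ^ k * (-1:ℝ) ^ k = 1 := by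
      rw [← pow_add]; exact Even.neg_one_pow ⟨k, rfl⟩
    rw [show ((-y):ℝ) ^ 2 = y ^ 2 from by ring,
      show ((-y):ℝ) ^ k = (-1:ℝ) ^ k * y ^ k from by rw [neg_pow]]
    linear_combination (c' * C * (1 + y ^ 2 / (ν / γ ^ 2)) ^ (-((ν+1)/2)) * y ^ k) * hs1
  -- equality of integrands on pieces
  have heqpos : EqOn (fun y : ℝ => y ^ k * tpDens γ ν y) fpos (Ici 0) := by
    intro y (hy : 0 ≤ y)
    simp only [hfpos, tpDens, if_pos hy, ← hc']
    ring
  have heqneg : EqOn (fun y : ℝ => y ^ k * tpDens γ ν y) fneg (Iio 0) := by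
    intro y (hy : y < 0)
    simp only [hfneg, tpDens, if_neg (not_le.mpr hy), ← hc']
    ring
  -- split the integral
  have hsplit : ∫ y : ℝ, y ^ k * tpDens γ ν y =
      (∫ y in Iio (0:ℝ), fneg y) + ∫ y in Ici (0:ℝ), fpos y := by
    rw [← setIntegral_congr_fun measurableSet_Iio heqneg,
      ← setIntegral_congr_fun measurableSet_Ici heqpos]
    exact (intervalIntegral.integral_Iio_add_Ici (hintneg.congr_fun heqneg.symm measurableSet_Iio)
      (hintpos.congr_fun heqpos.symm measurableSet_Ici)).symm
  set M : ℝ := ∫ x in Ioi (0:ℝ), x ^ k * tDens ν x with hM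
  -- positive piece
  have hpos_val : ∫ y in Ici (0:ℝ), fpos y = γ ^ (k + 1) * c' * M := by
    rw [integral_Ici_eq_integral_Ioi]
    have key := MeasureTheory.integral_comp_mul_left_Ioi
      (g := fun x : ℝ => c' * ((γ * x) ^ k * tDens ν x)) 0 (inv_pos.mpr hγ)
    rw [mul_zero, inv_inv, smul_eq_mul] at key
    have h1 : ∀ x ∈ Ioi (0:ℝ), c' * ((γ * (γ⁻¹ * x)) ^ k * tDens ν (γ⁻¹ * x)) = fpos x := by
      intro x _
      have e1 : γ * (γ⁻¹ * x) = x := by field_simp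
      have e2 : γ⁻¹ * x = x / γ := by field_simp
      rw [e1, e2]
    rw [setIntegral_congr_fun measurableSet_Ioi h1] at key
    have h2 : ∀ x ∈ Ioi (0:ℝ), c' * ((γ * x) ^ k * tDens ν x)
        = (c' * γ ^ k) * (x ^ k * tDens ν x) := by
      intro x _
      rw [mul_pow]
      ring
    rw [setIntegral_congr_fun measurableSet_Ioi h2, integral_const_mul,
      integral_const_mul] at key
    rw [show (∫ t in Ioi (0:ℝ), fpos t) = c' * ∫ a in Ioi (0:ℝ), a ^ k * tDens ν (a / γ)
        from by simp only [hfpos]; exact integral_const_mul c' _]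
    rw [key, ← hM]
    ring
  -- negative piece
  have hneg_val : ∫ y in Iio (0:ℝ), fneg y = (-1:ℝ) ^ k * (γ ^ (k+1))⁻¹ * c' * M := by
    have e := integral_comp_neg_Ioi (0:ℝ) fneg
    rw [neg_zero] at e
    rw [← integral_Iic_eq_integral_Iio, ← e]
    have h0 : ∀ x ∈ Ioi (0:ℝ), fneg (-x)
        = ((-1:ℝ) ^ k) * (c' * (x ^ k * tDens ν (γ * x))) := by
      intro x _
      simp only [hfneg]
      have : tDens ν (γ * -x) = tDens ν (γ * x) := by
        simp only [tDens]
        rw [show (γ * -x) ^ 2 = (γ * x) ^ 2 from by ring]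
      rw [this, show ((-x):ℝ) ^ k = (-1:ℝ) ^ k * x ^ k from by rw [neg_pow]]
      ring
    rw [setIntegral_congr_fun measurableSet_Ioi h0, integral_const_mul]
    have key := MeasureTheory.integral_comp_mul_left_Ioi
      (g := fun u : ℝ => c' * ((γ⁻¹ * u) ^ k * tDens ν u)) 0 hγ
    rw [mul_zero, smul_eq_mul] at key
    have h1 : ∀ x ∈ Ioi (0:ℝ), c' * ((γ⁻¹ * (γ * x)) ^ k * tDens ν (γ * x))
        = c' * (x ^ k * tDens ν (γ * x)) := by
      intro x _
      rw [show γ⁻¹ * (γ * x) = x from by field_simp]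
    have h2 : ∀ u ∈ Ioi (0:ℝ), c' * ((γ⁻¹ * u) ^ k * tDens ν u)
        = (c' * γ⁻¹ ^ k) * (u ^ k * tDens ν u) := by
      intro u _
      rw [mul_pow]
      ring
    rw [setIntegral_congr_fun measurableSet_Ioi h1,
      setIntegral_congr_fun measurableSet_Ioi h2, integral_const_mul,
      integral_const_mul] at key
    rw [integral_const_mul, key, ← hM, inv_pow, pow_succ, mul_inv]
    ring
  rw [hsplit, hpos_val, hneg_val, hM, M_val hν hk]
  have hzpow : γ ^ (-(k:ℤ) - 1) = (γ ^ (k+1))⁻¹ := by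
    rw [show (-(k:ℤ) - 1) = -((k+1 : ℕ) : ℤ) from by push_cast; ring, zpow_neg, zpow_natCast]
  rw [hzpow]
  ring
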